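/- Let G = (V,E) be a finite simple graph and let γ be a real number with 0 < γ < 1. For every natural number s with 1 ≤ s ≤ s*, it holds that s ≤ solve-defect(get-k(s)). -/

import Mathlib

open Finset

/-- Number of edges of the subgraph of `G` induced by the vertex set `S`. -/
def edgesIn {V : Type*} (G : SimpleGraph V) [DecidableRel G.Adj] (S : Finset V) : ℕ :=
  ((S ×ˢ S).filter fun p => G.Adj p.1 p.2).card / 2

/-- Degree of `u` within `S`: the number of neighbors of `u` lying in `S`. -/
def degIn {V : Type*} (G : SimpleGraph V) [DecidableRel G.Adj] (S : Finset V) (u : V) : ℕ :=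
  (S.filter fun v => G.Adj u v).card

/-- `G[S]` is an edge-based γ-quasi-clique: `e(S) ≥ γ * C(|S|, 2)`. -/
def IsEQC {V : Type*} (G : SimpleGraph V) [DecidableRel G.Adj] (γ : ℝ) (S : Finset V) : Prop :=
  γ * ((S.card.choose 2 : ℕ) : ℝ) ≤ (edgesIn G S : ℝ)

/-- `G[S]` is a k-defective clique: `e(S) ≥ C(|S|, 2) - k`. -/
def IsDefective {V : Type*} (G : SimpleGraph V) [DecidableRel G.Adj] (k : ℕ) (S : Finset V) : Prop :=
  S.card.choose 2 ≤ edgesIn G S + k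

/-- `get-k(s) = ⌊(1 - γ) * C(s, 2)⌋`. -/
noncomputable def getK (γ : ℝ) (s : ℕ) : ℕ :=
  (⌊(1 - γ) * ((s.choose 2 : ℕ) : ℝ)⌋).toNat

/-- `solve-defect(k)`: the maximum size of a k-defective clique in `G`. -/
noncomputable def solveDefect {V : Type*} (G : SimpleGraph V) [DecidableRel G.Adj] (k : ℕ) : ℕ :=
  sSup {n | ∃ S : Finset V, IsDefective G k S ∧ S.card = n}

/-- `s*`: the maximum size of an edge-based γ-quasi-clique in `G`. -/
noncomputable def sStar {V : Type*} (G : SimpleGraph V) [DecidableRel G.Adj] (γ : ℝ) : ℕ :=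
  sSup {n | ∃ S : Finset V, IsEQC G γ S ∧ S.card = n}

section Helpers

variable {V : Type*} [DecidableEq V] (G : SimpleGraph V) [DecidableRel G.Adj]

lemma T_eq_sum (S : Finset V) :
    ((S ×ˢ S).filter fun p => G.Adj p.1 p.2).card = ∑ v ∈ S, degIn G S v := by
  rw [Finset.card_eq_sum_card_fiberwise (f := Prod.fst) (t := S)
    (fun p hp => (Finset.mem_product.1 (Finset.mem_filter.1 hp).1).1)]
  refine Finset.sum_congr rfl fun v hv => ?_
  have : (((S ×ˢ S).filter fun p => G.Adj p.1 p.2).filter fun p => p.1 = v)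
      = {v} ×ˢ (S.filter fun w => G.Adj v w) := by
    ext ⟨a, b⟩
    simp only [Finset.mem_filter, Finset.mem_product, Finset.mem_singleton]
    constructor
    · rintro ⟨⟨⟨ha, hb⟩, hadj⟩, rfl⟩; exact ⟨rfl, hb, hadj⟩
    · rintro ⟨rfl, hb, hadj⟩; exact ⟨⟨⟨hv, hb⟩, hadj⟩, rfl⟩
  rw [this, Finset.singleton_product, Finset.card_map, degIn]

lemma degIn_erase_self (S : Finset V) (u : V) :
    degIn G (S.erase u) u = degIn G S u := by
  unfold degIn
  rw [Finset.filter_erase, Finset.erase_eq_of_notMem]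
  simp [G.irrefl]

lemma degIn_erase_other (S : Finset V) {u : V} (hu : u ∈ S) (v : V) :
    degIn G S v = degIn G (S.erase u) v + (if G.Adj v u then 1 else 0) := by
  unfold degIn
  rw [Finset.filter_erase]
  by_cases h : G.Adj v u
  · rw [if_pos h, Finset.card_erase_add_one]
    exact Finset.mem_filter.2 ⟨hu, h⟩
  · rw [if_neg h, Finset.erase_eq_of_notMem (fun hmem => h (Finset.mem_filter.1 hmem).2)]
    simp

lemma T_split (S : Finset V) {u : V} (hu : u ∈ S) :
    ((S ×ˢ S).filter fun p => G.Adj p.1 p.2).card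
      = (((S.erase u) ×ˢ (S.erase u)).filter fun p => G.Adj p.1 p.2).card
        + 2 * degIn G S u := by
  rw [T_eq_sum, T_eq_sum]
  rw [← Finset.add_sum_erase _ _ hu]
  have h1 : ∑ v ∈ S.erase u, degIn G S v
      = ∑ v ∈ S.erase u, (degIn G (S.erase u) v + (if G.Adj v u then 1 else 0)) :=
    Finset.sum_congr rfl fun v _ => degIn_erase_other G S hu v
  rw [h1, Finset.sum_add_distrib]
  have h2 : ∑ v ∈ S.erase u, (if G.Adj v u then 1 else 0) = degIn G (S.erase u) u := by
    rw [degIn, Finset.card_filter]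
    exact Finset.sum_congr rfl fun v _ => by simp [G.adj_comm]
  rw [h2, degIn_erase_self]
  ring

lemma T_even (S : Finset V) :
    ((S ×ˢ S).filter fun p => G.Adj p.1 p.2).card = 2 * edgesIn G S := by
  have he : Even ((S ×ˢ S).filter fun p => G.Adj p.1 p.2).card := by
    induction S using Finset.induction_on with
    | empty => simp
    | @insert a s ha ih =>
      have := T_split G (insert a s) (Finset.mem_insert_self a s)
      rw [Finset.erase_insert ha] at this
      rw [this]
      exact ih.add (even_two_mul _)
  obtain ⟨m, hm⟩ := he
  rw [edgesIn, hm]; omega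

lemma edgesIn_erase (S : Finset V) {u : V} (hu : u ∈ S) :
    edgesIn G S = edgesIn G (S.erase u) + degIn G S u := by
  have h := T_split G S hu
  rw [T_even, T_even] at h
  omega

lemma eqc_step {γ : ℝ} (hγ : 0 ≤ γ) (S : Finset V) (h : IsEQC G γ S) (h2 : 2 ≤ S.card) :
    ∃ T : Finset V, IsEQC G γ T ∧ T.card = S.card - 1 := by
  have hne : S.Nonempty := Finset.card_pos.1 (by omega)
  obtain ⟨u, hu, hmin⟩ := Finset.exists_min_image S (degIn G S) hne
  have hsum : S.card * degIn G S u ≤ 2 * edgesIn G S := by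
    rw [← T_even, T_eq_sum]
    calc S.card * degIn G S u = S.card • degIn G S u := (smul_eq_mul _ _).symm
    _ ≤ ∑ v ∈ S, degIn G S v := Finset.card_nsmul_le_sum _ _ _ hmin
  refine ⟨S.erase u, ?_, Finset.card_erase_of_mem hu⟩
  have hsplit := edgesIn_erase G S hu
  unfold IsEQC at h ⊢
  rw [Finset.card_erase_of_mem hu]
  set n := S.card with hn
  have hn2 : (2:ℕ) ≤ n := h2
  have hc1 : ((n.choose 2 : ℕ) : ℝ) = (n:ℝ) * ((n:ℝ) - 1) / 2 := Nat.cast_choose_two ℝ n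
  have hc2 : (((n-1).choose 2 : ℕ) : ℝ) = ((n-1 : ℕ):ℝ) * (((n-1 : ℕ):ℝ) - 1) / 2 := Nat.cast_choose_two ℝ _
  have hcast1 : ((n - 1 : ℕ) : ℝ) = (n : ℝ) - 1 := by
    push_cast [Nat.cast_sub (by omega : 1 ≤ n)]; ring
  have he : (edgesIn G S : ℝ) = (edgesIn G (S.erase u) : ℝ) + (degIn G S u : ℝ) := by
    rw [hsplit]; push_cast; ring
  have hsumR : (n : ℝ) * (degIn G S u : ℝ) ≤ 2 * (edgesIn G S : ℝ) := by
    exact_mod_cast hsum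
  have hnR : (2:ℝ) ≤ (n:ℝ) := by exact_mod_cast hn2
  rw [hc2, hcast1]
  rw [hc1] at h
  nlinarith [h, hsumR, he, hnR, hγ, mul_nonneg hγ (Nat.cast_nonneg (degIn G S u))]

lemma eqc_shrink {γ : ℝ} (hγ : 0 ≤ γ) :
    ∀ n : ℕ, ∀ S : Finset V, S.card = n → IsEQC G γ S →
      ∀ m : ℕ, 1 ≤ m → m ≤ n → ∃ T : Finset V, IsEQC G γ T ∧ T.card = m := by
  intro n
  induction n with
  | zero => intro S _ _ m hm1 hmn; omega
  | succ n ih =>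
    intro S hS hEQC m hm1 hmn
    rcases eq_or_lt_of_le hmn with heq | hlt
    · exact ⟨S, hEQC, by omega⟩
    · have h2 : 2 ≤ S.card := by omega
      obtain ⟨T, hT, hTcard⟩ := eqc_step G hγ S hEQC h2
      exact ih T (by omega) hT m hm1 (by omega)

end Helpers

theorem check_true_below_sStar
    {V : Type*} [Fintype V] [DecidableEq V] [Nonempty V]
    (G : SimpleGraph V) [DecidableRel G.Adj]
    (γ : ℝ) (hγ0 : 0 < γ) (hγ1 : γ < 1) :
    ∀ s : ℕ, 1 ≤ s → s ≤ sStar G γ → s ≤ solveDefect G (getK γ s) := by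
  intro s hs1 hsle
  -- s* is attained
  have hne : {n | ∃ S : Finset V, IsEQC G γ S ∧ S.card = n}.Nonempty := by
    obtain ⟨v⟩ := (inferInstance : Nonempty V)
    refine ⟨1, {v}, ?_, Finset.card_singleton v⟩
    unfold IsEQC
    simp [Nat.choose]
  have hbdd : BddAbove {n | ∃ S : Finset V, IsEQC G γ S ∧ S.card = n} := by
    refine ⟨Fintype.card V, fun n hn => ?_⟩
    obtain ⟨S, _, rfl⟩ := hn
    exact Finset.card_le_univ S
  have hmem := Nat.sSup_mem hne hbdd
  obtain ⟨S, hSEQC, hScard⟩ := hmem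
  have hle : s ≤ S.card := by rw [hScard]; exact hsle
  obtain ⟨T, hTEQC, hTcard⟩ := eqc_shrink G (le_of_lt hγ0) S.card S rfl hSEQC s hs1 hle
  -- T is a defective clique
  have hdef : IsDefective G (getK γ s) T := by
    unfold IsDefective
    rw [hTcard]
    set C := s.choose 2 with hC
    set e := edgesIn G T with he
    have hEQ : γ * (C : ℝ) ≤ (e : ℝ) := by
      have := hTEQC; unfold IsEQC at this; rw [hTcard] at this; exact this
    have hx0 : (0:ℝ) ≤ (1 - γ) * (C : ℝ) :=
      mul_nonneg (by linarith) (Nat.cast_nonneg _)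
    have hk : ((getK γ s : ℕ) : ℝ) = (⌊(1 - γ) * (C : ℝ)⌋ : ℤ) := by
      unfold getK
      rw [← hC]
      exact_mod_cast congrArg (fun z : ℤ => (z:ℝ)) (Int.toNat_of_nonneg (Int.floor_nonneg.2 hx0))
    have hfl : (1 - γ) * (C : ℝ) < ((getK γ s : ℕ) : ℝ) + 1 := by
      rw [hk]; exact Int.lt_floor_add_one _
    have hR : (C : ℝ) < (e : ℝ) + ((getK γ s : ℕ) : ℝ) + 1 := by nlinarith
    have : C < e + getK γ s + 1 := by exact_mod_cast hR
    omega
  -- conclude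
  have hbdd2 : BddAbove {n | ∃ S : Finset V, IsDefective G (getK γ s) S ∧ S.card = n} := by
    refine ⟨Fintype.card V, fun n hn => ?_⟩
    obtain ⟨S', _, rfl⟩ := hn
    exact Finset.card_le_univ S'
  exact le_csSup hbdd2 ⟨T, hdef, hTcard⟩
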